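/- Every complex root of p is real: if z ∈ ℂ satisfies (Tr T(z))² = 4(z−1)^{2k}, then Im z = 0. -/

import Mathlib

open Polynomial Matrix

/-- The matrix `A_m(z)` with rows `(z + α β⁻¹, α + β)` and `(z(α⁻¹+β⁻¹), z + β α⁻¹)`. -/
noncomputable def aztecA (a b : ℝ) (z : ℂ) : Matrix (Fin 2) (Fin 2) ℂ :=
  !![z + (a : ℂ) * ((b : ℂ))⁻¹, (a : ℂ) + (b : ℂ);
     z * (((a : ℂ))⁻¹ + ((b : ℂ))⁻¹), z + (b : ℂ) * ((a : ℂ))⁻¹]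

/-- `T(z) = A_1(z) A_2(z) ⋯ A_k(z)`. -/
noncomputable def aztecT {k : ℕ} (α β : Fin k → ℝ) (z : ℂ) : Matrix (Fin 2) (Fin 2) ℂ :=
  (List.ofFn fun m => aztecA (α m) (β m) z).prod

section AztecAux

open Complex

/-- The symmetrized factor `C(w,c)`. -/
noncomputable def matC (w : ℂ) (c : ℝ) : Matrix (Fin 2) (Fin 2) ℂ :=
  !![w, (c : ℂ); ((c : ℂ))⁻¹, w]

/-- The indefinite quadratic form `q(x) = 2 Re (conj x₀ · x₁)`. -/
noncomputable def qf (x : Fin 2 → ℂ) : ℝ :=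
  2 * ((starRingEnd ℂ) (x 0) * x 1).re

lemma qf_zero : qf 0 = 0 := by simp [qf]

lemma vec_cases {x : Fin 2 → ℂ} (hx : x ≠ 0) : x 0 ≠ 0 ∨ x 1 ≠ 0 := by
  by_contra h
  push_neg at h
  apply hx
  funext i
  fin_cases i <;> simp [h.1, h.2]

lemma mulVec_matC (w : ℂ) (c : ℝ) (x : Fin 2 → ℂ) :
    (matC w c).mulVec x = ![w * x 0 + (c : ℂ) * x 1, ((c : ℂ))⁻¹ * x 0 + w * x 1] := by
  funext i
  fin_cases i <;> simp [matC, Matrix.mulVec, dotProduct, Fin.sum_univ_two, Matrix.vecHead, Matrix.vecTail]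

lemma qf_step (w : ℂ) (c : ℝ) (hc : 0 < c) (x : Fin 2 → ℂ) :
    qf ((matC w c).mulVec x) =
      (normSq w + 1) * qf x + 2 * w.re * (c⁻¹ * normSq (x 0) + c * normSq (x 1)) := by
  have hc0 : c ≠ 0 := ne_of_gt hc
  rw [mulVec_matC]
  simp only [qf, Matrix.cons_val_zero, Matrix.cons_val_one, Matrix.head_cons]
  rw [← Complex.ofReal_inv]
  simp only [Complex.normSq_apply, _root_.map_add, _root_.map_mul, Complex.mul_re, Complex.add_re,
    Complex.add_im, Complex.mul_im, Complex.conj_re, Complex.conj_im, Complex.ofReal_re,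
    Complex.ofReal_im]
  field_simp
  ring

lemma qf_step_lt (w : ℂ) (hw : 0 < w.re) (c : ℝ) (hc : 0 < c)
    (x : Fin 2 → ℂ) (hx : x ≠ 0) (hq : 0 ≤ qf x) :
    (normSq w + 1) * qf x < qf ((matC w c).mulVec x) ∧ (matC w c).mulVec x ≠ 0 := by
  have h := qf_step w c hc x
  have hpos : 0 < c⁻¹ * normSq (x 0) + c * normSq (x 1) := by
    rcases vec_cases hx with h0 | h1
    · have := Complex.normSq_pos.mpr h0
      have := Complex.normSq_nonneg (x 1)
      positivity
    · have := Complex.normSq_pos.mpr h1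
      have := Complex.normSq_nonneg (x 0)
      positivity
  have hlt : (normSq w + 1) * qf x < qf ((matC w c).mulVec x) := by nlinarith
  refine ⟨hlt, fun h0 => ?_⟩
  rw [h0, qf_zero] at hlt
  nlinarith [Complex.normSq_nonneg w]

lemma qf_smul (a : ℂ) (x : Fin 2 → ℂ) : qf (a • x) = normSq a * qf x := by
  simp only [qf, Pi.smul_apply, smul_eq_mul, _root_.map_mul]
  have h1 : (starRingEnd ℂ) a * (starRingEnd ℂ) (x 0) * (a * x 1)
      = (a * (starRingEnd ℂ) a) * ((starRingEnd ℂ) (x 0) * x 1) := by ring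
  rw [h1, Complex.mul_conj]
  simp [Complex.mul_re]
  ring

lemma qf_chain (w : ℂ) (hw : 0 < w.re) (l : List (ℝ × ℝ))
    (hl : ∀ p ∈ l, 0 < p.1 ∧ 0 < p.2) (x : Fin 2 → ℂ) (hx : x ≠ 0) (hq : 0 ≤ qf x) :
    ((l.map fun p => matC w p.1 * matC w p.2).prod.mulVec x ≠ 0) ∧
      ((normSq w + 1) ^ 2) ^ l.length * qf x ≤
        qf ((l.map fun p => matC w p.1 * matC w p.2).prod.mulVec x) ∧
      (l ≠ [] → ((normSq w + 1) ^ 2) ^ l.length * qf x <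
        qf ((l.map fun p => matC w p.1 * matC w p.2).prod.mulVec x)) := by
  induction l with
  | nil =>
      simp only [List.map_nil, List.prod_nil, Matrix.one_mulVec, List.length_nil, pow_zero,
        one_mul]
      exact ⟨hx, le_refl _, fun h => absurd rfl h⟩
  | cons p l ih =>
      have hp := hl p List.mem_cons_self
      have hl' : ∀ q ∈ l, 0 < q.1 ∧ 0 < q.2 := fun q hq' => hl q (List.mem_cons_of_mem p hq')
      obtain ⟨hne, hle, _⟩ := ih hl'
      set y := (l.map fun p => matC w p.1 * matC w p.2).prod.mulVec x with hy
      have hqy : 0 ≤ qf y := by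
        have hM : (0:ℝ) ≤ ((normSq w + 1) ^ 2) ^ l.length := by positivity
        calc (0:ℝ) ≤ ((normSq w + 1) ^ 2) ^ l.length * qf x := mul_nonneg hM hq
        _ ≤ qf y := hle
      obtain ⟨hlt1, hne1⟩ := qf_step_lt w hw p.2 hp.2 y hne hqy
      have hq1 : 0 ≤ qf ((matC w p.2).mulVec y) := by
        have h0 : (0:ℝ) ≤ (normSq w + 1) * qf y :=
          mul_nonneg (by nlinarith [Complex.normSq_nonneg w]) hqy
        linarith
      obtain ⟨hlt2, hne2⟩ := qf_step_lt w hw p.1 hp.1 _ hne1 hq1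
      have hrw : ((p :: l).map fun p => matC w p.1 * matC w p.2).prod.mulVec x
          = (matC w p.1).mulVec ((matC w p.2).mulVec y) := by
        rw [List.map_cons, List.prod_cons, hy, Matrix.mulVec_mulVec, Matrix.mulVec_mulVec,
          mul_assoc]
      have hM1 : (1:ℝ) ≤ normSq w + 1 := by nlinarith [Complex.normSq_nonneg w]
      have hM0 : (0:ℝ) < normSq w + 1 := by linarith
      have key : ((normSq w + 1) ^ 2) ^ (p :: l).length * qf x <
          qf (((p :: l).map fun p => matC w p.1 * matC w p.2).prod.mulVec x) := by
        rw [hrw, List.length_cons]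
        have h1 : (normSq w + 1) * ((normSq w + 1) * qf y) ≤
            (normSq w + 1) * qf ((matC w p.2).mulVec y) := by nlinarith
        have h2 : ((normSq w + 1) ^ 2) ^ (l.length + 1) * qf x ≤
            (normSq w + 1) * ((normSq w + 1) * qf y) := by
          have : ((normSq w + 1) ^ 2) ^ (l.length + 1) * qf x
              = (normSq w + 1) * ((normSq w + 1) * (((normSq w + 1) ^ 2) ^ l.length * qf x)) := by
            ring
          rw [this]
          have hMM : (0:ℝ) ≤ (normSq w + 1) * (normSq w + 1) := by positivity
          nlinarith
        nlinarith
      refine ⟨?_, le_of_lt key, fun _ => key⟩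
      rw [hrw]; exact hne2

noncomputable def matE (w : ℂ) : Matrix (Fin 2) (Fin 2) ℂ := !![1, 0; 0, w]
noncomputable def matEinv (w : ℂ) : Matrix (Fin 2) (Fin 2) ℂ := !![1, 0; 0, w⁻¹]

lemma matEinv_mul (w : ℂ) (hw : w ≠ 0) : matEinv w * matE w = 1 := by
  rw [matEinv, matE, Matrix.mul_fin_two, Matrix.one_fin_two]
  congr 1
  simp [inv_mul_cancel₀ hw]

lemma matE_mul (w : ℂ) (hw : w ≠ 0) : matE w * matEinv w = 1 := by
  rw [matEinv, matE, Matrix.mul_fin_two, Matrix.one_fin_two]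
  congr 1
  simp [mul_inv_cancel₀ hw]

set_option maxHeartbeats 1000000 in
lemma aztecA_factor (w : ℂ) (hw : w ≠ 0) (a b : ℝ) (ha : a ≠ 0) (hb : b ≠ 0) :
    aztecA a b (w ^ 2) = matE w * (matC w a * matC w b) * matEinv w := by
  have ha' : (a : ℂ) ≠ 0 := Complex.ofReal_ne_zero.mpr ha
  have hb' : (b : ℂ) ≠ 0 := Complex.ofReal_ne_zero.mpr hb
  rw [matC, matC, matE, matEinv, aztecA, Matrix.mul_fin_two, Matrix.mul_fin_two,
    Matrix.mul_fin_two]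
  ext i j
  fin_cases i <;> fin_cases j <;>
    simp only [Matrix.cons_val_zero, Matrix.cons_val_one, Matrix.head_cons, Matrix.head_fin_const,
      Matrix.cons_val', Matrix.empty_val', Matrix.cons_val_fin_one, Matrix.of_apply, Fin.isValue, Fin.zero_eta, Fin.mk_one]
  all_goals field_simp
  all_goals try ring
  all_goals tauto

lemma conj_list_prod (E Einv : Matrix (Fin 2) (Fin 2) ℂ) (h1 : Einv * E = 1) (h2 : E * Einv = 1)
    (l : List (Matrix (Fin 2) (Fin 2) ℂ)) :
    (l.map fun X => E * X * Einv).prod = E * l.prod * Einv := by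
  induction l with
  | nil => simp only [List.map_nil, List.prod_nil, mul_one, h2]
  | cons X l ih =>
      rw [List.map_cons, List.prod_cons, ih, List.prod_cons]
      calc E * X * Einv * (E * l.prod * Einv)
          = E * (X * (Einv * E * (l.prod * Einv))) := by simp only [mul_assoc]
        _ = E * (X * l.prod) * Einv := by
            rw [h1, one_mul, ← mul_assoc, ← mul_assoc, mul_assoc E X l.prod]

lemma qf_decomp (a d : ℂ) (y : Fin 2 → ℂ) :
    qf (a • ![1, Complex.I] + d • y) ≤ Complex.normSq d * qf y +
      2 * ‖a‖ * ‖d‖ * (‖y 0‖ + ‖y 1‖) := by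
  have hc0 : (a • ![1, Complex.I] + d • y) 0 = a * 1 + d * y 0 := by
    simp
  have hc1 : (a • ![1, Complex.I] + d • y) 1 = a * Complex.I + d * y 1 := by
    simp
  have hexp : (starRingEnd ℂ) (a * 1 + d * y 0) * (a * Complex.I + d * y 1) =
      ((Complex.normSq a : ℝ) : ℂ) * Complex.I + (starRingEnd ℂ) a * d * y 1 +
        a * (starRingEnd ℂ) d * (starRingEnd ℂ) (y 0) * Complex.I +
        ((Complex.normSq d : ℝ) : ℂ) * ((starRingEnd ℂ) (y 0) * y 1) := by
    simp only [_root_.map_add, _root_.map_mul, _root_.map_one, mul_one]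
    linear_combination Complex.I * Complex.mul_conj a +
      ((starRingEnd ℂ) (y 0) * y 1) * Complex.mul_conj d
  have hre : qf (a • ![1, Complex.I] + d • y) =
      2 * ((starRingEnd ℂ) a * d * y 1).re +
        2 * (a * (starRingEnd ℂ) d * (starRingEnd ℂ) (y 0) * Complex.I).re +
        Complex.normSq d * qf y := by
    rw [qf, hc0, hc1, hexp]
    simp only [Complex.add_re, Complex.mul_re, Complex.ofReal_re, Complex.ofReal_im,
      Complex.I_re, Complex.I_im, qf]
    ring
  have h1 := Complex.re_le_norm ((starRingEnd ℂ) a * d * y 1)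
  have h2 := Complex.re_le_norm (a * (starRingEnd ℂ) d * (starRingEnd ℂ) (y 0) * Complex.I)
  rw [norm_mul, norm_mul, Complex.norm_conj] at h1
  rw [norm_mul, norm_mul, norm_mul, Complex.norm_conj, Complex.norm_conj,
    Complex.norm_I, mul_one] at h2
  rw [hre]
  nlinarith [norm_nonneg a, norm_nonneg d]

end AztecAux

/-- every complex root of the discriminant is real:
if `(Tr T(z))² = 4 (z−1)^{2k}` then `Im z = 0`. -/
theorem stmt0 (k : ℕ) (hk : 1 ≤ k) (α β : Fin k → ℝ)
    (hα : ∀ m, 0 < α m) (hβ : ∀ m, 0 < β m)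
    (hprod : ∏ m, α m = ∏ m, β m)
    (z : ℂ)
    (hz : (Matrix.trace (aztecT α β z)) ^ 2 = 4 * (z - 1) ^ (2 * k)) :
    z.im = 0 := by
  by_contra him
  -- z is not real, in particular z ≠ 1
  have hz1 : z - 1 ≠ 0 := by
    intro h
    apply him
    rw [sub_eq_zero] at h
    rw [h]
    rfl
  -- choose a square root w of z with positive real part
  obtain ⟨w0, hw0⟩ := IsAlgClosed.exists_pow_nat_eq (k := ℂ) z (n := 2) (by norm_num)
  have hw0re : w0.re ≠ 0 := by
    intro h
    apply him
    have h2 : z.im = (w0 ^ 2).im := by rw [hw0]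
    rw [h2, sq, Complex.mul_im, h]
    ring
  have hwex : ∃ w : ℂ, w ^ 2 = z ∧ 0 < w.re := by
    rcases lt_or_gt_of_ne hw0re with h | h
    · exact ⟨-w0, by rw [neg_pow]; simp [hw0], by simp [h]⟩
    · exact ⟨w0, hw0, h⟩
  obtain ⟨w, hw2, hwre⟩ := hwex
  have hwne : w ≠ 0 := by
    intro h
    rw [h] at hwre
    simp at hwre
  -- the conjugated product Q
  set L : List (ℝ × ℝ) := List.ofFn (fun m : Fin k => (α m, β m)) with hL
  have hLpos : ∀ p ∈ L, 0 < p.1 ∧ 0 < p.2 := by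
    intro p hp
    rw [hL, List.mem_ofFn] at hp
    obtain ⟨m, hm⟩ := hp
    rw [← hm]
    exact ⟨hα m, hβ m⟩
  have hLlen : L.length = k := by rw [hL, List.length_ofFn]
  have hLne : L ≠ [] := by
    intro h
    have := congrArg List.length h
    rw [hLlen] at this
    simp at this
    omega
  set Q : Matrix (Fin 2) (Fin 2) ℂ := (L.map fun p => matC w p.1 * matC w p.2).prod with hQ
  have hmap : (L.map fun p => matC w p.1 * matC w p.2)
      = List.ofFn (fun m : Fin k => matC w (α m) * matC w (β m)) := by
    rw [hL, List.map_ofFn]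
    rfl
  -- T(z) = E Q E⁻¹
  have hTQ : aztecT α β z = matE w * Q * matEinv w := by
    rw [aztecT]
    have hlist : (List.ofFn fun m => aztecA (α m) (β m) z)
        = List.map (fun X => matE w * X * matEinv w)
            (List.ofFn fun m : Fin k => matC w (α m) * matC w (β m)) := by
      rw [List.map_ofFn]
      congr 1
      funext m
      show aztecA (α m) (β m) z = matE w * (matC w (α m) * matC w (β m)) * matEinv w
      rw [← hw2]
      exact aztecA_factor w hwne _ _ (ne_of_gt (hα m)) (ne_of_gt (hβ m))
    rw [hlist, conj_list_prod _ _ (matEinv_mul w hwne) (matE_mul w hwne), hQ, hmap]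
  have htr : Matrix.trace (aztecT α β z) = Matrix.trace Q := by
    rw [hTQ, Matrix.trace_mul_cycle, matEinv_mul w hwne, one_mul]
  -- the determinant of Q
  have hdetC : ∀ m : Fin k, (matC w (α m) * matC w (β m)).det = (z - 1) ^ 2 := by
    intro m
    have hα' : ((α m : ℝ) : ℂ) ≠ 0 := Complex.ofReal_ne_zero.mpr (ne_of_gt (hα m))
    have hβ' : ((β m : ℝ) : ℂ) ≠ 0 := Complex.ofReal_ne_zero.mpr (ne_of_gt (hβ m))
    rw [Matrix.det_mul, matC, matC, Matrix.det_fin_two_of, Matrix.det_fin_two_of,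
      mul_inv_cancel₀ hα', mul_inv_cancel₀ hβ', ← hw2]
    ring
  have hdetQ : Q.det = ((z - 1) ^ 2) ^ k := by
    rw [hQ, hmap]
    have h := map_list_prod (Matrix.detMonoidHom)
      (List.ofFn fun m : Fin k => matC w (α m) * matC w (β m))
    simp only [Matrix.coe_detMonoidHom] at h
    rw [h, List.map_ofFn]
    have hfun : (Matrix.det ∘ fun m : Fin k => matC w (α m) * matC w (β m))
        = fun _ : Fin k => (z - 1) ^ 2 := by
      funext m
      exact hdetC m
    rw [hfun, List.ofFn_const, List.prod_replicate]
  -- the double eigenvalue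
  set lam : ℂ := Matrix.trace Q / 2 with hlam
  have htr2 : Matrix.trace Q = 2 * lam := by
    rw [hlam]
    ring
  have hlam2 : lam ^ 2 = (z - 1) ^ (2 * k) := by
    have h := hz
    rw [htr, htr2] at h
    linear_combination h / 4
  have hdetlam : Q.det = lam ^ 2 := by
    rw [hdetQ, hlam2, ← pow_mul]
  have hlamne : lam ≠ 0 := by
    intro h
    rw [h] at hlam2
    have h0 : (z - 1) ^ (2 * k) = 0 := by rw [← hlam2]; ring
    exact hz1 (pow_eq_zero_iff (by omega) |>.mp h0)
  -- N = Q - lam • 1 is square-zero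
  set N : Matrix (Fin 2) (Fin 2) ℂ := Q - lam • 1 with hNdef
  have htrQ : Q 0 0 + Q 1 1 = 2 * lam := by
    rw [← Matrix.trace_fin_two, htr2]
  have hdetQ2 : Q 0 0 * Q 1 1 - Q 0 1 * Q 1 0 = lam ^ 2 := by
    rw [← Matrix.det_fin_two, hdetlam]
  have hN2 : N * N = 0 := by
    rw [hNdef]
    ext i j
    fin_cases i <;> fin_cases j <;>
      simp [Matrix.mul_apply, Fin.sum_univ_two, Matrix.one_apply]
    · linear_combination Q 0 0 * htrQ - hdetQ2
    · linear_combination Q 0 1 * htrQ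
    · linear_combination Q 1 0 * htrQ
    · linear_combination Q 1 1 * htrQ - hdetQ2
  have hQspl : ∀ x : Fin 2 → ℂ, Q.mulVec x = lam • x + N.mulVec x := by
    intro x
    have hQN : Q = lam • 1 + N := by
      rw [hNdef]
      abel
    rw [hQN, Matrix.add_mulVec, Matrix.smul_mulVec, Matrix.one_mulVec]
  -- the cone-expansion property of Q
  have chain : ∀ x : Fin 2 → ℂ, x ≠ 0 → 0 ≤ qf x →
      Q.mulVec x ≠ 0 ∧ ((Complex.normSq w + 1) ^ 2) ^ k * qf x ≤ qf (Q.mulVec x) ∧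
        ((Complex.normSq w + 1) ^ 2) ^ k * qf x < qf (Q.mulVec x) := by
    intro x hx hq0
    obtain ⟨h1, h2, h3⟩ := qf_chain w hwre L hLpos x hx hq0
    rw [hLlen] at h2 h3
    exact ⟨h1, h2, h3 hLne⟩
  -- the modulus bound on lam
  have hnorm : Complex.normSq lam ≤ ((Complex.normSq w + 1) ^ 2) ^ k := by
    have habsz : ‖z‖ = Complex.normSq w := by
      rw [← hw2, norm_pow, Complex.sq_norm]
    have h2 : ‖z - 1‖ ≤ Complex.normSq w + 1 := by
      calc ‖z - 1‖ ≤ ‖z‖ + ‖(1:ℂ)‖ := by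
            exact norm_sub_le z 1
        _ = Complex.normSq w + 1 := by rw [habsz, norm_one]
    have h1 : Complex.normSq lam = ‖z - 1‖ ^ (2 * k) := by
      rw [← Complex.sq_norm, ← norm_pow, hlam2, norm_pow]
    rw [h1, ← pow_mul]
    exact pow_le_pow_left₀ (norm_nonneg _) h2 _
  -- the test vector u = (1, i)
  set u : Fin 2 → ℂ := ![1, Complex.I] with hu
  have hune : u ≠ 0 := by
    intro h
    have := congrFun h 0
    rw [hu] at this
    simp at this
  have hqu : qf u = 0 := by
    simp [qf, hu]
  set y : Fin 2 → ℂ := N.mulVec u with hydef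
  have hNy : N.mulVec y = 0 := by
    rw [hydef, Matrix.mulVec_mulVec, hN2, Matrix.zero_mulVec]
  by_cases hy0 : y = 0
  · -- Q is scalar on u, contradiction on the null vector u
    have hQu : Q.mulVec u = lam • u := by
      rw [hQspl, ← hydef, hy0, add_zero]
    obtain ⟨-, -, h3⟩ := chain u hune (le_of_eq hqu.symm)
    rw [hQu, qf_smul, hqu, mul_zero, mul_zero] at h3
    exact lt_irrefl 0 h3
  · by_cases hqy : 0 ≤ qf y
    · -- eigenvector in the nonnegative cone: modulus contradiction
      have hQy : Q.mulVec y = lam • y := by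
        rw [hQspl, hNy, add_zero]
      obtain ⟨-, -, h3⟩ := chain y hy0 hqy
      rw [hQy, qf_smul] at h3
      nlinarith
    · push_neg at hqy
      -- eigenvector in the negative cone: Jordan-block blow-up contradiction
      have hform : ∀ n : ℕ, (Q ^ (n + 1)).mulVec u
          = lam ^ (n + 1) • u + (((n : ℂ) + 1) * lam ^ n) • y := by
        intro n
        induction n with
        | zero =>
            rw [pow_one, hQspl, ← hydef]
            simp
        | succ n ih =>
            rw [pow_succ', ← Matrix.mulVec_mulVec, ih, hQspl, Matrix.mulVec_add,
              Matrix.mulVec_smul, Matrix.mulVec_smul, ← hydef, hNy, smul_zero, add_zero]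
            rw [smul_add, smul_smul, smul_smul, add_assoc, ← add_smul]
            congr 1
            · congr 1
              ring
            · congr 1
              push_cast
              ring
      have hpos : ∀ n : ℕ, 0 ≤ qf ((Q ^ n).mulVec u) ∧ (Q ^ n).mulVec u ≠ 0 := by
        intro n
        induction n with
        | zero =>
            rw [pow_zero, Matrix.one_mulVec]
            exact ⟨le_of_eq hqu.symm, hune⟩
        | succ n ih =>
            obtain ⟨hq1, hne1⟩ := ih
            obtain ⟨h1, h2, -⟩ := chain _ hne1 hq1
            rw [pow_succ', ← Matrix.mulVec_mulVec]
            refine ⟨?_, h1⟩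
            have h0 : (0:ℝ) ≤ ((Complex.normSq w + 1) ^ 2) ^ k * qf ((Q ^ n).mulVec u) :=
              mul_nonneg (by positivity) hq1
            linarith
      set B : ℝ := ‖y 0‖ + ‖y 1‖ with hB
      set r : ℝ := ‖lam‖ with hr
      have hrpos : 0 < r := norm_pos_iff.mpr hlamne
      have hBnn : 0 ≤ B := by
        rw [hB]
        positivity
      have key : ∀ n : ℕ, 0 ≤ ((n : ℝ) + 1) ^ 2 * qf y + 2 * r * ((n : ℝ) + 1) * B := by
        intro n
        have h0 := (hpos (n + 1)).1
        rw [hform n, hu] at h0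
        have hb := qf_decomp (lam ^ (n + 1)) (((n : ℂ) + 1) * lam ^ n) y
        have habs_a : ‖lam ^ (n + 1)‖ = r ^ (n + 1) := by
          rw [norm_pow, hr]
        have habs_d : ‖((n : ℂ) + 1) * lam ^ n‖ = ((n : ℝ) + 1) * r ^ n := by
          rw [norm_mul, norm_pow, hr]
          congr 1
          rw [show ((n : ℂ) + 1) = (((n : ℝ) + 1 : ℝ) : ℂ) by push_cast; ring,
            Complex.norm_of_nonneg (by positivity)]
        have hns_d : Complex.normSq (((n : ℂ) + 1) * lam ^ n) = (((n : ℝ) + 1) * r ^ n) ^ 2 := by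
          rw [← Complex.sq_norm, habs_d]
        rw [hns_d, habs_a, habs_d, ← hB] at hb
        have hfac : (((n : ℝ) + 1) * r ^ n) ^ 2 * qf y
            + 2 * r ^ (n + 1) * (((n : ℝ) + 1) * r ^ n) * B
            = (r ^ n) ^ 2 * (((n : ℝ) + 1) ^ 2 * qf y + 2 * r * ((n : ℝ) + 1) * B) := by
          ring
        have h00 : (0:ℝ) ≤ (r ^ n) ^ 2 *
            (((n : ℝ) + 1) ^ 2 * qf y + 2 * r * ((n : ℝ) + 1) * B) := by
          rw [← hfac]
          linarith
        have hpow : (0:ℝ) < (r ^ n) ^ 2 := by positivity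
        exact (mul_nonneg_iff_of_pos_left hpow).mp h00
      obtain ⟨n, hn⟩ := exists_nat_gt (2 * r * B / (-(qf y)))
      have hqy' : (0:ℝ) < -(qf y) := by linarith
      rw [div_lt_iff₀ hqy'] at hn
      have hkey := key n
      have hn1 : (2 * r * B) < ((n:ℝ) + 1) * -(qf y) := by
        have : (n:ℝ) ≤ (n:ℝ) + 1 := by linarith
        nlinarith
      nlinarith [hkey, hn1, sq_nonneg ((n:ℝ) + 1)]
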